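/- Let 𝔽 be an equation in the u-variables (field F with shift S and total derivative D_t) and 𝔽̃ an equation in the ũ-variables (field F̃ with shift S̃ and total derivative D̃_t), both N-component. Let Φ = (Φ¹,…,Φ^N) with Φ^i ∈ F̃, and let φ be the substitution determined by φ(n) = n and φ(u^j_ℓ) = S̃^ℓ(Φ^j) for all j, ℓ (the K-algebra homomorphism on polynomials, extended to all fractions admitting a representation whose denominator has nonzero image). Assume: (i) Φ is a Miura-type transformation from 𝔽̃ to 𝔽, i.e., φ(𝔽^i) is defined and D̃_t(Φ^i) = φ(𝔽^i) for every i = 1,…,N; (ii) (M,U) is an MLR for 𝔽 such that φ is defined on every entry of M and U, and det φ(M) ≠ 0. Then (φ(M), φ(U)) (φ applied entrywise) is an MLR for 𝔽̃, i.e. D̃_t(φ(M)) = S̃(φ(U))·φ(M) − φ(M)·φ(U). -/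

import Mathlib

open MvPolynomial

/-- Variables: `none` is the variable `n`; `some (j, ℓ)` is the variable `u^j_ℓ`
(on the second copy of the field, `ũ^j_ℓ`). -/
abbrev Var (N : ℕ) := Option (Fin N × ℤ)

/-- The polynomial ring over `K` in the variables `n` and `u^j_ℓ`. -/
abbrev PolyF (K : Type) [Field K] (N : ℕ) := MvPolynomial (Var N) K

/-- The field of rational functions over `K` in the variables `n` and `u^j_ℓ`
(used both for `F` and for `F̃`). -/
abbrev FF (K : Type) [Field K] (N : ℕ) := FractionRing (PolyF K N)

/-- The image in the fraction field of the variable `v`. -/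
noncomputable def gen (K : Type) [Field K] (N : ℕ) (v : Var N) : FF K N :=
  algebraMap (PolyF K N) (FF K N) (X v)

/-- `f` depends only on `n` and the variables with `α ≤ ℓ ≤ β`. -/
def DependsOnly (K : Type) [Field K] (N : ℕ) (α β : ℤ) (f : FF K N) : Prop :=
  f ∈ Subfield.closure (Set.range (algebraMap K (FF K N)) ∪ {gen K N none} ∪
    { x | ∃ (j : Fin N) (ℓ : ℤ), α ≤ ℓ ∧ ℓ ≤ β ∧ x = gen K N (some (j, ℓ)) })

/-- The total derivative `D_t(f) = Σ_{ℓ,ξ} S^ℓ(𝔽^ξ)·∂_{ξ,ℓ}(f)` associated with the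
right-hand side `𝔽 : Fin N → F` (the sum over `ℓ ∈ ℤ` is finite, taken as `finsum`). -/
noncomputable def Dt (K : Type) [Field K] (N : ℕ) (S : FF K N ≃+* FF K N)
    (P : Fin N → ℤ → FF K N → FF K N) (Fv : Fin N → FF K N) (f : FF K N) : FF K N :=
  ∑ᶠ ℓ : ℤ, ∑ ξ : Fin N, (S ^ ℓ) (Fv ξ) * P ξ ℓ f

/-- The substitution homomorphism `φ` on polynomials, determined by `φ(n) = n` and
`φ(u^j_ℓ) = S̃^ℓ(Φ^j)`. -/
noncomputable def phi0 (K : Type) [Field K] (N : ℕ) (St : FF K N ≃+* FF K N)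
    (Φ : Fin N → FF K N) : PolyF K N →+* FF K N :=
  eval₂Hom ((algebraMap (PolyF K N) (FF K N)).comp (C : K →+* PolyF K N))
    (fun v : Var N =>
      match v with
      | none => gen K N none
      | some (j, ℓ) => (St ^ ℓ) (Φ j))


namespace Stmt10
variable {K : Type} [Field K] {N : ℕ}

noncomputable abbrev ι (K : Type) [Field K] (N : ℕ) : PolyF K N →+* FF K N :=
  algebraMap (PolyF K N) (FF K N)

lemma ι_inj : Function.Injective (ι K N) := IsFractionRing.injective _ _

lemma ι_C (c : K) : ι K N (C c) = algebraMap K (FF K N) c := by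
  rw [IsScalarTower.algebraMap_apply K (PolyF K N) (FF K N), MvPolynomial.algebraMap_eq]

lemma ι_ne_zero {g : PolyF K N} (h : g ≠ 0) : ι K N g ≠ 0 := fun h0 => h (ι_inj (by rw [h0, map_zero]))

lemma gen_eq (v : Var N) : gen K N v = ι K N (X v) := rfl

lemma FF_surj (z : FF K N) : ∃ g h : PolyF K N, ι K N h ≠ 0 ∧ z = ι K N g / ι K N h := by
  obtain ⟨x, y, hy, h⟩ := IsFractionRing.div_surjective (A := PolyF K N) z
  exact ⟨x, y, IsFractionRing.to_map_ne_zero_of_mem_nonZeroDivisors hy, h.symm⟩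

/-- A derivation-like map on `FF K N`. -/
structure IsDer (Q : FF K N → FF K N) : Prop where
  add : ∀ x y, Q (x + y) = Q x + Q y
  mul : ∀ x y, Q (x * y) = x * Q y + Q x * y
  algK : ∀ c : K, Q (algebraMap K (FF K N) c) = 0

namespace IsDer
variable {Q Q' : FF K N → FF K N}

lemma one (hQ : IsDer Q) : Q 1 = 0 := by
  have := hQ.algK 1; rwa [map_one] at this

lemma zero (hQ : IsDer Q) : Q 0 = 0 := by
  have := hQ.add 0 0; simp at this; linear_combination this

lemma div (hQ : IsDer Q) (x y : FF K N) (hy : y ≠ 0) :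
    Q (x / y) = (Q x - (x / y) * Q y) / y := by
  have h1 : Q x = Q (x / y * y) := by rw [div_mul_cancel₀ _ hy]
  rw [hQ.mul] at h1
  rw [eq_div_iff hy]
  linear_combination -h1

lemma eq_on_poly (hQ : IsDer Q) (hQ' : IsDer Q')
    (hgen : ∀ v, Q (gen K N v) = Q' (gen K N v)) (g : PolyF K N) :
    Q (ι K N g) = Q' (ι K N g) := by
  induction g using MvPolynomial.induction_on with
  | C c => rw [ι_C, hQ.algK, hQ'.algK]
  | add p q hp hq => rw [RingHom.map_add, hQ.add, hQ'.add, hp, hq]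
  | mul_X p v hp =>
      rw [RingHom.map_mul, hQ.mul, hQ'.mul, hp, ← gen_eq, hgen v]

lemma ext (hQ : IsDer Q) (hQ' : IsDer Q')
    (hgen : ∀ v, Q (gen K N v) = Q' (gen K N v)) : Q = Q' := by
  funext z
  obtain ⟨g, h, hh, rfl⟩ := FF_surj z
  rw [hQ.div _ _ hh, hQ'.div _ _ hh, eq_on_poly hQ hQ' hgen, eq_on_poly hQ hQ' hgen]

end IsDer

/-- Bundle of a shift, partial derivatives and an equation. -/
structure Ctx (K : Type) [Field K] (N : ℕ) where
  S : FF K N ≃+* FF K N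
  hSK : ∀ c : K, S (algebraMap K (FF K N) c) = algebraMap K (FF K N) c
  hSn : S (gen K N none) = gen K N none + 1
  hSu : ∀ (j : Fin N) (ℓ : ℤ), S (gen K N (some (j, ℓ))) = gen K N (some (j, ℓ + 1))
  P : Fin N → ℤ → FF K N → FF K N
  hPadd : ∀ j ℓ x y, P j ℓ (x + y) = P j ℓ x + P j ℓ y
  hPmul : ∀ j ℓ x y, P j ℓ (x * y) = x * P j ℓ y + P j ℓ x * y
  hPK : ∀ (j : Fin N) (ℓ : ℤ) (c : K), P j ℓ (algebraMap K (FF K N) c) = 0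
  hPn : ∀ (j : Fin N) (ℓ : ℤ), P j ℓ (gen K N none) = 0
  hPu : ∀ (j : Fin N) (ℓ : ℤ) (i : Fin N) (m : ℤ),
    P j ℓ (gen K N (some (i, m))) = if i = j ∧ m = ℓ then 1 else 0
  Fv : Fin N → FF K N

namespace Ctx
variable (c : Ctx K N)

noncomputable def DT : FF K N → FF K N := Dt K N c.S c.P c.Fv

lemma Pder (j : Fin N) (ℓ : ℤ) : IsDer (c.P j ℓ) := ⟨c.hPadd j ℓ, c.hPmul j ℓ, c.hPK j ℓ⟩

lemma P_X (j : Fin N) (ℓ : ℤ) (v : Var N) :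
    c.P j ℓ (ι K N (X v)) = ι K N (pderiv (some (j, ℓ)) (X v)) := by
  match v with
  | none => rw [← gen_eq, c.hPn, pderiv_X_of_ne (by simp), map_zero]
  | some (i, m) =>
      rw [← gen_eq, c.hPu, pderiv_X, Pi.single_apply]
      by_cases hc : i = j ∧ m = ℓ
      · obtain ⟨rfl, rfl⟩ := hc; simp
      · rw [if_neg hc, if_neg (by simp [Prod.ext_iff]; tauto), map_zero]

/-- `P` is the partial derivative on polynomials. -/
lemma P_poly (j : Fin N) (ℓ : ℤ) (g : PolyF K N) :
    c.P j ℓ (ι K N g) = ι K N (pderiv (some (j, ℓ)) g) := by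
  induction g using MvPolynomial.induction_on with
  | C a => rw [ι_C, c.hPK, pderiv_C, map_zero]
  | add p q hp hq => rw [RingHom.map_add, c.hPadd, hp, hq, map_add, RingHom.map_add]
  | mul_X p v hp =>
      rw [RingHom.map_mul, c.hPmul, hp, c.P_X, pderiv_mul, RingHom.map_add, RingHom.map_mul,
        RingHom.map_mul]
      ring

/-- canonical finite set of shifts appearing in a polynomial -/
noncomputable def suppT (g : PolyF K N) : Finset ℤ := g.vars.image (fun v => (v.map Prod.snd).getD 0)

lemma suppT_spec {g : PolyF K N} {m : ℤ} (hm : m ∉ suppT g) (j : Fin N) :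
    pderiv (some (j, m)) g = 0 := by
  apply pderiv_eq_zero_of_notMem_vars
  intro hv
  exact hm (Finset.mem_image.2 ⟨some (j, m), hv, rfl⟩)

lemma P_supp (z : FF K N) : ∃ T : Finset ℤ, ∀ (j : Fin N) (ℓ : ℤ), ℓ ∉ T → c.P j ℓ z = 0 := by
  obtain ⟨g, h, hh, rfl⟩ := FF_surj z
  refine ⟨suppT g ∪ suppT h, fun j ℓ hℓ => ?_⟩
  rw [(c.Pder j ℓ).div _ _ hh, c.P_poly, c.P_poly,
    suppT_spec (fun hx => hℓ (Finset.mem_union_left _ hx)) j,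
    suppT_spec (fun hx => hℓ (Finset.mem_union_right _ hx)) j]
  simp

noncomputable def suppOf (z : FF K N) : Finset ℤ := (c.P_supp z).choose

lemma suppOf_spec {z : FF K N} {j : Fin N} {ℓ : ℤ} (h : ℓ ∉ c.suppOf z) : c.P j ℓ z = 0 :=
  (c.P_supp z).choose_spec j ℓ h

lemma DT_eq_sum (z : FF K N) (T : Finset ℤ) (hT : ∀ (j : Fin N) (ℓ : ℤ), ℓ ∉ T → c.P j ℓ z = 0) :
    c.DT z = ∑ ℓ ∈ T, ∑ ξ : Fin N, (c.S ^ ℓ) (c.Fv ξ) * c.P ξ ℓ z := by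
  apply finsum_eq_finset_sum_of_support_subset
  intro ℓ hℓ
  by_contra hT'
  apply hℓ
  simp only [Function.mem_support, ne_eq, not_not]
  exact Finset.sum_eq_zero fun ξ _ => by rw [hT ξ ℓ (by simpa using hT'), mul_zero]

lemma DT_der : IsDer c.DT := by
  constructor
  · intro x y
    obtain ⟨Tx, hTx⟩ := c.P_supp x
    obtain ⟨Ty, hTy⟩ := c.P_supp y
    rw [c.DT_eq_sum x (Tx ∪ Ty) (fun j ℓ h => hTx j ℓ fun h' => h (Finset.mem_union_left _ h')),
      c.DT_eq_sum y (Tx ∪ Ty) (fun j ℓ h => hTy j ℓ fun h' => h (Finset.mem_union_right _ h')),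
      c.DT_eq_sum (x + y) (Tx ∪ Ty) (fun j ℓ h => by
        rw [c.hPadd, hTx j ℓ fun h' => h (Finset.mem_union_left _ h'),
          hTy j ℓ fun h' => h (Finset.mem_union_right _ h'), add_zero]),
      ← Finset.sum_add_distrib]
    refine Finset.sum_congr rfl fun ℓ _ => ?_
    rw [← Finset.sum_add_distrib]
    refine Finset.sum_congr rfl fun ξ _ => ?_
    rw [c.hPadd, mul_add]
  · intro x y
    obtain ⟨Tx, hTx⟩ := c.P_supp x
    obtain ⟨Ty, hTy⟩ := c.P_supp y
    rw [c.DT_eq_sum x (Tx ∪ Ty) (fun j ℓ h => hTx j ℓ fun h' => h (Finset.mem_union_left _ h')),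
      c.DT_eq_sum y (Tx ∪ Ty) (fun j ℓ h => hTy j ℓ fun h' => h (Finset.mem_union_right _ h')),
      c.DT_eq_sum (x * y) (Tx ∪ Ty) (fun j ℓ h => by
        rw [c.hPmul, hTx j ℓ fun h' => h (Finset.mem_union_left _ h'),
          hTy j ℓ fun h' => h (Finset.mem_union_right _ h'), mul_zero, zero_mul, add_zero]),
      Finset.mul_sum, Finset.sum_mul, ← Finset.sum_add_distrib]
    refine Finset.sum_congr rfl fun ℓ _ => ?_
    rw [Finset.mul_sum, Finset.sum_mul, ← Finset.sum_add_distrib]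
    refine Finset.sum_congr rfl fun ξ _ => ?_
    rw [c.hPmul]
    ring
  · intro k
    rw [c.DT_eq_sum _ (∅ : Finset ℤ) (fun j ℓ _ => c.hPK j ℓ k), Finset.sum_empty]

lemma DT_gen_none : c.DT (gen K N none) = 0 := by
  rw [c.DT_eq_sum _ (∅ : Finset ℤ) (fun j ℓ _ => c.hPn j ℓ), Finset.sum_empty]

lemma DT_gen (i : Fin N) (m : ℤ) : c.DT (gen K N (some (i, m))) = (c.S ^ m) (c.Fv i) := by
  rw [c.DT_eq_sum _ ({m} : Finset ℤ) (fun j ℓ hℓ => by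
    rw [c.hPu, if_neg (fun hc => hℓ (by simp [hc.2]))]), Finset.sum_singleton]
  rw [Finset.sum_eq_single i]
  · rw [c.hPu, if_pos ⟨rfl, rfl⟩, mul_one]
  · intro ξ _ hξ
    rw [c.hPu, if_neg (fun hc => hξ hc.1.symm), mul_zero]
  · intro h; exact absurd (Finset.mem_univ i) h

lemma S_pow_succ (m : ℤ) (x : FF K N) : (c.S ^ (m + 1)) x = c.S ((c.S ^ m) x) := by
  rw [add_comm, zpow_one_add]; rfl

lemma S_pow_pred (m : ℤ) (x : FF K N) : (c.S ^ (m - 1)) x = (c.S ^ m) (c.S.symm x) := by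
  rw [zpow_sub_one]; rfl

lemma DT_one : c.DT 1 = 0 := c.DT_der.one

lemma DT_S_comm (x : FF K N) : c.DT (c.S x) = c.S (c.DT x) := by
  have hQ : IsDer (fun y : FF K N => c.S.symm (c.DT (c.S y))) := by
    constructor
    · intro u v
      show c.S.symm (c.DT (c.S (u + v))) = _
      rw [RingEquiv.map_add, c.DT_der.add, RingEquiv.map_add]
    · intro u v
      show c.S.symm (c.DT (c.S (u * v))) = _
      rw [RingEquiv.map_mul, c.DT_der.mul, RingEquiv.map_add, RingEquiv.map_mul,
        RingEquiv.map_mul, RingEquiv.symm_apply_apply, RingEquiv.symm_apply_apply]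
    · intro k
      show c.S.symm (c.DT (c.S (algebraMap K (FF K N) k))) = 0
      rw [c.hSK, c.DT_der.algK, RingEquiv.map_zero]
  have hext := IsDer.ext hQ c.DT_der (fun v => ?_)
  · have h2 : c.S.symm (c.DT (c.S x)) = c.DT x := congrFun hext x
    rw [← h2, RingEquiv.apply_symm_apply]
  · match v with
    | none =>
        show c.S.symm (c.DT (c.S (gen K N none))) = _
        rw [c.hSn, c.DT_der.add, c.DT_gen_none, c.DT_one, add_zero, RingEquiv.map_zero]
    | some (i, m) =>
        show c.S.symm (c.DT (c.S (gen K N (some (i, m))))) = _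
        rw [c.hSu, c.DT_gen, c.DT_gen, c.S_pow_succ, RingEquiv.symm_apply_apply]

lemma DT_Ssymm_comm (x : FF K N) : c.DT (c.S.symm x) = c.S.symm (c.DT x) := by
  have := c.DT_S_comm (c.S.symm x)
  rw [RingEquiv.apply_symm_apply] at this
  rw [this, RingEquiv.symm_apply_apply]

lemma DT_zpow_comm (m : ℤ) (x : FF K N) : c.DT ((c.S ^ m) x) = (c.S ^ m) (c.DT x) := by
  induction m using Int.induction_on generalizing x with
  | zero => rw [zpow_zero]; rfl
  | succ n ih => rw [c.S_pow_succ, c.S_pow_succ, c.DT_S_comm, ih]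
  | pred n ih => rw [c.S_pow_pred, c.S_pow_pred, ih, c.DT_Ssymm_comm]

end Ctx

open Ctx

section Phi
variable (ct : Ctx K N) (Φ : Fin N → FF K N)

lemma phi0_C (a : K) : phi0 K N ct.S Φ (C a) = algebraMap K (FF K N) a := by
  rw [phi0, eval₂Hom_C, RingHom.comp_apply, ι_C]

lemma phi0_X_none : phi0 K N ct.S Φ (X none) = gen K N none := by
  rw [phi0]; simp only [eval₂Hom_X']

lemma phi0_X_some (j : Fin N) (m : ℤ) :
    phi0 K N ct.S Φ (X (some (j, m))) = (ct.S ^ m) (Φ j) := by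
  rw [phi0]; simp only [eval₂Hom_X']

/-- the shift endomorphism of the polynomial ring -/
noncomputable def sh : PolyF K N →+* PolyF K N :=
  eval₂Hom C (fun v : Var N =>
    match v with
    | none => X none + 1
    | some (j, m) => X (some (j, m + 1)))

/-- the backwards shift endomorphism of the polynomial ring -/
noncomputable def sh' : PolyF K N →+* PolyF K N :=
  eval₂Hom C (fun v : Var N =>
    match v with
    | none => X none - 1
    | some (j, m) => X (some (j, m - 1)))

lemma S_ι (c : Ctx K N) (g : PolyF K N) : c.S (ι K N g) = ι K N (sh g) := by
  have h : ((c.S : FF K N →+* FF K N).comp (ι K N)) = (ι K N).comp (sh (K := K) (N := N)) := by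
    apply MvPolynomial.ringHom_ext
    · intro a
      simp only [RingHom.comp_apply, sh, eval₂Hom_C, ι_C]
      exact c.hSK a
    · intro v
      simp only [RingHom.comp_apply, sh, eval₂Hom_X']
      match v with
      | none =>
          show c.S (ι K N (X none)) = ι K N (X none + 1)
          rw [← gen_eq, c.hSn, RingHom.map_add, RingHom.map_one, ← gen_eq]
      | some (j, m) =>
          show c.S (ι K N (X (some (j, m)))) = ι K N (X (some (j, m + 1)))
          rw [← gen_eq, c.hSu, ← gen_eq]
  exact RingHom.congr_fun h g

lemma Ssymm_ι (c : Ctx K N) (g : PolyF K N) : c.S.symm (ι K N g) = ι K N (sh' g) := by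
  have h : ((c.S.symm : FF K N →+* FF K N).comp (ι K N)) = (ι K N).comp (sh' (K := K) (N := N)) := by
    apply MvPolynomial.ringHom_ext
    · intro a
      simp only [RingHom.comp_apply, sh', eval₂Hom_C, ι_C]
      show c.S.symm ((algebraMap K (FF K N)) a) = (algebraMap K (FF K N)) a
      conv_lhs => rw [← c.hSK a]
      rw [RingEquiv.symm_apply_apply]
    · intro v
      simp only [RingHom.comp_apply, sh', eval₂Hom_X']
      match v with
      | none =>
          show c.S.symm (ι K N (X none)) = ι K N (X none - 1)
          have : (ι K N) (X none) = c.S ((ι K N) (X none - 1)) := by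
            rw [RingHom.map_sub, RingHom.map_one, RingEquiv.map_sub,
              ← gen_eq, c.hSn]
            simp [RingEquiv.map_one]
          rw [this, RingEquiv.symm_apply_apply]
      | some (j, m) =>
          show c.S.symm (ι K N (X (some (j, m)))) = ι K N (X (some (j, m - 1)))
          have : (ι K N) (X (some (j, m))) = c.S ((ι K N) (X (some (j, m - 1)))) := by
            rw [← gen_eq, ← gen_eq, c.hSu, sub_add_cancel]
          rw [this, RingEquiv.symm_apply_apply]
  exact RingHom.congr_fun h g

lemma S_phi0 (g : PolyF K N) : ct.S (phi0 K N ct.S Φ g) = phi0 K N ct.S Φ (sh g) := by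
  have h : ((ct.S : FF K N →+* FF K N).comp (phi0 K N ct.S Φ)) =
      (phi0 K N ct.S Φ).comp (sh (K := K) (N := N)) := by
    apply MvPolynomial.ringHom_ext
    · intro a
      simp only [RingHom.comp_apply, sh, eval₂Hom_C, phi0_C]
      exact ct.hSK a
    · intro v
      simp only [RingHom.comp_apply, sh, eval₂Hom_X']
      match v with
      | none =>
          show ct.S (phi0 K N ct.S Φ (X none)) = phi0 K N ct.S Φ (X none + 1)
          rw [phi0_X_none, RingHom.map_add, RingHom.map_one, phi0_X_none, ct.hSn]
      | some (j, m) =>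
          show ct.S (phi0 K N ct.S Φ (X (some (j, m)))) = phi0 K N ct.S Φ (X (some (j, m + 1)))
          rw [phi0_X_some, phi0_X_some, ← ct.S_pow_succ]
  exact RingHom.congr_fun h g

lemma Ssymm_phi0 (g : PolyF K N) :
    ct.S.symm (phi0 K N ct.S Φ g) = phi0 K N ct.S Φ (sh' g) := by
  have h : ((ct.S.symm : FF K N →+* FF K N).comp (phi0 K N ct.S Φ)) =
      (phi0 K N ct.S Φ).comp (sh' (K := K) (N := N)) := by
    apply MvPolynomial.ringHom_ext
    · intro a
      simp only [RingHom.comp_apply, sh', eval₂Hom_C, phi0_C]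
      show ct.S.symm ((algebraMap K (FF K N)) a) = (algebraMap K (FF K N)) a
      conv_lhs => rw [← ct.hSK a]
      rw [RingEquiv.symm_apply_apply]
    · intro v
      simp only [RingHom.comp_apply, sh', eval₂Hom_X']
      match v with
      | none =>
          show ct.S.symm (phi0 K N ct.S Φ (X none)) = phi0 K N ct.S Φ (X none - 1)
          have : phi0 K N ct.S Φ (X none) = ct.S (phi0 K N ct.S Φ (X none - 1)) := by
            rw [RingHom.map_sub, RingHom.map_one, RingEquiv.map_sub, RingEquiv.map_one,
              phi0_X_none, ct.hSn]
            ring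
          rw [this, RingEquiv.symm_apply_apply]
      | some (j, m) =>
          show ct.S.symm (phi0 K N ct.S Φ (X (some (j, m)))) = phi0 K N ct.S Φ (X (some (j, m - 1)))
          have : phi0 K N ct.S Φ (X (some (j, m))) =
              ct.S (phi0 K N ct.S Φ (X (some (j, m - 1)))) := by
            rw [phi0_X_some, phi0_X_some, ← ct.S_pow_succ, sub_add_cancel]
          rw [this, RingEquiv.symm_apply_apply]
  exact RingHom.congr_fun h g

lemma sum_indep (g : PolyF K N) (F : ℤ → Fin N → FF K N) (T T' : Finset ℤ)
    (hT : ∀ (j : Fin N) (m : ℤ), m ∉ T → pderiv (some (j, m)) g = 0)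
    (hT' : ∀ (j : Fin N) (m : ℤ), m ∉ T' → pderiv (some (j, m)) g = 0) :
    ∑ m ∈ T, ∑ j, phi0 K N ct.S Φ (pderiv (some (j, m)) g) * F m j =
    ∑ m ∈ T', ∑ j, phi0 K N ct.S Φ (pderiv (some (j, m)) g) * F m j := by
  have key : ∀ (TT TT' : Finset ℤ) (_ : TT ⊆ TT'),
      (∀ (j : Fin N) (m : ℤ), m ∉ TT → pderiv (some (j, m)) g = 0) →
      ∑ m ∈ TT', ∑ j, phi0 K N ct.S Φ (pderiv (some (j, m)) g) * F m j =
      ∑ m ∈ TT, ∑ j, phi0 K N ct.S Φ (pderiv (some (j, m)) g) * F m j := by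
    intro TT TT' hsub hTT
    symm
    apply Finset.sum_subset hsub
    intro m _ hm
    exact Finset.sum_eq_zero fun j _ => by rw [hTT j m hm, map_zero, zero_mul]
  rw [← key T (T ∪ T') Finset.subset_union_left hT,
    key T' (T ∪ T') Finset.subset_union_right hT']

lemma double_delta (i : Fin N) (m₀ : ℤ) (T : Finset ℤ) (hm₀ : m₀ ∈ T)
    (G : ℤ → Fin N → FF K N) :
    ∑ m ∈ T, ∑ j, (if some (i, m₀) = some (j, m) then G m j else 0) = G m₀ i := by
  rw [Finset.sum_eq_single m₀]
  · rw [Finset.sum_eq_single i]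
    · rw [if_pos rfl]
    · intro j _ hj
      rw [if_neg (by simp [Prod.ext_iff]; intro h; exact absurd h.symm hj)]
    · intro h; exact absurd (Finset.mem_univ i) h
  · intro m _ hm
    apply Finset.sum_eq_zero
    intro j _
    rw [if_neg (by simp [Prod.ext_iff]; intro _ h; exact absurd h.symm hm)]
  · intro h; exact absurd hm₀ h

set_option maxHeartbeats 2000000 in
lemma chain (ξ : Fin N) (ℓ : ℤ) (g : PolyF K N) :
    ∀ T : Finset ℤ, (∀ (j : Fin N) (m : ℤ), m ∉ T → pderiv (some (j, m)) g = 0) →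
    ct.P ξ ℓ (phi0 K N ct.S Φ g) =
      ∑ m ∈ T, ∑ j, phi0 K N ct.S Φ (pderiv (some (j, m)) g) *
        ct.P ξ ℓ ((ct.S ^ m) (Φ j)) := by
  induction g using MvPolynomial.induction_on with
  | C a =>
      intro T hT
      rw [phi0_C, ct.hPK]
      symm
      refine Finset.sum_eq_zero fun m _ => Finset.sum_eq_zero fun j _ => ?_
      rw [pderiv_C, map_zero, zero_mul]
  | add p q hp hq =>
      intro T hT
      have hTp : ∀ (j : Fin N) (m : ℤ), m ∉ T ∪ suppT p ∪ suppT q →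
          pderiv (some (j, m)) p = 0 := fun j m hm =>
        suppT_spec (fun hx => hm (Finset.mem_union_left _ (Finset.mem_union_right _ hx))) j
      have hTq : ∀ (j : Fin N) (m : ℤ), m ∉ T ∪ suppT p ∪ suppT q →
          pderiv (some (j, m)) q = 0 := fun j m hm =>
        suppT_spec (fun hx => hm (Finset.mem_union_right _ hx)) j
      have hTpq : ∀ (j : Fin N) (m : ℤ), m ∉ T ∪ suppT p ∪ suppT q →
          pderiv (some (j, m)) (p + q) = 0 := fun j m hm => by
        rw [map_add, hTp j m hm, hTq j m hm, add_zero]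
      rw [RingHom.map_add, ct.hPadd, hp _ hTp, hq _ hTq, ← Finset.sum_add_distrib]
      rw [sum_indep ct Φ (p + q) _ T (T ∪ suppT p ∪ suppT q) hT hTpq]
      refine Finset.sum_congr rfl fun m _ => ?_
      rw [← Finset.sum_add_distrib]
      refine Finset.sum_congr rfl fun j _ => ?_
      rw [map_add, RingHom.map_add, add_mul]
  | mul_X p v hp =>
      intro T hT
      match v with
      | none =>
          have hTp : ∀ (j : Fin N) (m : ℤ), m ∉ T ∪ suppT p →
              pderiv (some (j, m)) p = 0 := fun j m hm =>
            suppT_spec (fun hx => hm (Finset.mem_union_right _ hx)) j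
          have hTg : ∀ (j : Fin N) (m : ℤ), m ∉ T ∪ suppT p →
              pderiv (some (j, m)) (p * X none) = 0 := fun j m hm => by
            rw [pderiv_mul, hTp j m hm, pderiv_X_of_ne (by simp), mul_zero, zero_mul, add_zero]
          rw [sum_indep ct Φ (p * X none) _ T (T ∪ suppT p) hT hTg,
            RingHom.map_mul, phi0_X_none, ct.hPmul, ct.hPn, mul_zero, zero_add, hp _ hTp,
            Finset.sum_mul]
          refine Finset.sum_congr rfl fun m _ => ?_
          rw [Finset.sum_mul]
          refine Finset.sum_congr rfl fun j _ => ?_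
          rw [pderiv_mul, pderiv_X_of_ne (by simp), mul_zero, add_zero, RingHom.map_mul,
            phi0_X_none]
          ring
      | some (i, m₀) =>
          have hTp : ∀ (j : Fin N) (m : ℤ), m ∉ T ∪ suppT p ∪ {m₀} →
              pderiv (some (j, m)) p = 0 := fun j m hm =>
            suppT_spec (fun hx => hm
              (Finset.mem_union_left _ (Finset.mem_union_right _ hx))) j
          have hTg : ∀ (j : Fin N) (m : ℤ), m ∉ T ∪ suppT p ∪ {m₀} →
              pderiv (some (j, m)) (p * X (some (i, m₀))) = 0 := by
            intro j m hm
            have hne : (some (i, m₀) : Var N) ≠ some (j, m) := by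
              intro hc
              apply hm
              refine Finset.mem_union_right _ ?_
              simp only [Option.some.injEq, Prod.mk.injEq] at hc
              rw [← hc.2]
              exact Finset.mem_singleton_self m₀
            rw [pderiv_mul, hTp j m hm, pderiv_X_of_ne hne, mul_zero, zero_mul, add_zero]
          have hm₀ : m₀ ∈ T ∪ suppT p ∪ {m₀} :=
            Finset.mem_union_right _ (Finset.mem_singleton_self m₀)
          rw [sum_indep ct Φ (p * X (some (i, m₀))) _ T (T ∪ suppT p ∪ {m₀}) hT hTg,
            RingHom.map_mul, phi0_X_some, ct.hPmul, hp _ hTp]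
          have expand : ∀ m ∈ T ∪ suppT p ∪ {m₀}, ∀ j : Fin N,
              phi0 K N ct.S Φ (pderiv (some (j, m)) (p * X (some (i, m₀)))) *
                ct.P ξ ℓ ((ct.S ^ m) (Φ j)) =
              (phi0 K N ct.S Φ (pderiv (some (j, m)) p) * ct.P ξ ℓ ((ct.S ^ m) (Φ j))) *
                  (ct.S ^ m₀) (Φ i)
                + (if some (i, m₀) = some (j, m) then
                    phi0 K N ct.S Φ p * ct.P ξ ℓ ((ct.S ^ m) (Φ j)) else 0) := by
            intro m _ j
            rw [pderiv_mul, pderiv_X, Pi.single_apply, map_add, RingHom.map_mul,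
              RingHom.map_mul, phi0_X_some, add_mul]
            congr 1
            · ring
            · by_cases hc : (some (i, m₀) : Var N) = some (j, m)
              · rw [if_pos hc, if_pos hc, map_one, mul_one]
              · rw [if_neg hc, if_neg hc, map_zero, mul_zero, zero_mul]
          symm
          calc ∑ m ∈ T ∪ suppT p ∪ {m₀}, ∑ j,
                phi0 K N ct.S Φ (pderiv (some (j, m)) (p * X (some (i, m₀)))) *
                  ct.P ξ ℓ ((ct.S ^ m) (Φ j))
              = ∑ m ∈ T ∪ suppT p ∪ {m₀}, ∑ j,
                ((phi0 K N ct.S Φ (pderiv (some (j, m)) p) * ct.P ξ ℓ ((ct.S ^ m) (Φ j))) *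
                    (ct.S ^ m₀) (Φ i)
                  + (if some (i, m₀) = some (j, m) then
                      phi0 K N ct.S Φ p * ct.P ξ ℓ ((ct.S ^ m) (Φ j)) else 0)) :=
                Finset.sum_congr rfl fun m hm => Finset.sum_congr rfl fun j _ => expand m hm j
            _ = (∑ m ∈ T ∪ suppT p ∪ {m₀}, ∑ j,
                  phi0 K N ct.S Φ (pderiv (some (j, m)) p) * ct.P ξ ℓ ((ct.S ^ m) (Φ j))) *
                    (ct.S ^ m₀) (Φ i)
                + phi0 K N ct.S Φ p * ct.P ξ ℓ ((ct.S ^ m₀) (Φ i)) := by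
                rw [← double_delta i m₀ (T ∪ suppT p ∪ {m₀}) hm₀
                  (fun m j => phi0 K N ct.S Φ p * ct.P ξ ℓ ((ct.S ^ m) (Φ j))),
                  Finset.sum_mul, ← Finset.sum_add_distrib]
                refine Finset.sum_congr rfl fun m _ => ?_
                rw [Finset.sum_mul, ← Finset.sum_add_distrib]
            _ = phi0 K N ct.S Φ p * ct.P ξ ℓ ((ct.S ^ m₀) (Φ i))
                + (∑ m ∈ T ∪ suppT p ∪ {m₀}, ∑ j,
                  phi0 K N ct.S Φ (pderiv (some (j, m)) p) * ct.P ξ ℓ ((ct.S ^ m) (Φ j))) *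
                    (ct.S ^ m₀) (Φ i) := add_comm _ _

set_option maxHeartbeats 2000000 in
lemma DT_phi0 (g : PolyF K N) :
    ct.DT (phi0 K N ct.S Φ g) =
      ∑ m ∈ suppT g, ∑ j, phi0 K N ct.S Φ (pderiv (some (j, m)) g) *
        (ct.S ^ m) (ct.DT (Φ j)) := by
  classical
  set T₀ : Finset ℤ := ct.suppOf (phi0 K N ct.S Φ g) ∪ (suppT g).biUnion
      (fun m => Finset.univ.biUnion fun j => ct.suppOf ((ct.S ^ m) (Φ j))) with hT₀
  have h1 : ct.DT (phi0 K N ct.S Φ g) =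
      ∑ ℓ ∈ T₀, ∑ ξ, (ct.S ^ ℓ) (ct.Fv ξ) * ct.P ξ ℓ (phi0 K N ct.S Φ g) :=
    ct.DT_eq_sum _ _ (fun j ℓ h => ct.suppOf_spec (fun h' => h (Finset.mem_union_left _ h')))
  have h2 : ∀ m ∈ suppT g, ∀ j : Fin N, (ct.S ^ m) (ct.DT (Φ j)) =
      ∑ ℓ ∈ T₀, ∑ ξ, (ct.S ^ ℓ) (ct.Fv ξ) * ct.P ξ ℓ ((ct.S ^ m) (Φ j)) := by
    intro m hm j
    rw [← ct.DT_zpow_comm]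
    exact ct.DT_eq_sum _ _ (fun j' ℓ h => ct.suppOf_spec (fun h' => h
      (Finset.mem_union_right _ (Finset.mem_biUnion.2
        ⟨m, hm, Finset.mem_biUnion.2 ⟨j, Finset.mem_univ j, h'⟩⟩))))
  have h3 : ∀ (ℓ : ℤ) (ξ : Fin N), ct.P ξ ℓ (phi0 K N ct.S Φ g) =
      ∑ m ∈ suppT g, ∑ j, phi0 K N ct.S Φ (pderiv (some (j, m)) g) *
        ct.P ξ ℓ ((ct.S ^ m) (Φ j)) :=
    fun ℓ ξ => chain ct Φ ξ ℓ g (suppT g) (fun j m hm => suppT_spec hm j)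
  rw [h1]
  calc ∑ ℓ ∈ T₀, ∑ ξ, (ct.S ^ ℓ) (ct.Fv ξ) * ct.P ξ ℓ (phi0 K N ct.S Φ g)
      = ∑ ℓ ∈ T₀, ∑ ξ : Fin N, ∑ m ∈ suppT g, ∑ j : Fin N,
          phi0 K N ct.S Φ (pderiv (some (j, m)) g) *
            ((ct.S ^ ℓ) (ct.Fv ξ) * ct.P ξ ℓ ((ct.S ^ m) (Φ j))) := by
        refine Finset.sum_congr rfl fun ℓ _ => Finset.sum_congr rfl fun ξ _ => ?_
        rw [h3 ℓ ξ, Finset.mul_sum]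
        refine Finset.sum_congr rfl fun m _ => ?_
        rw [Finset.mul_sum]
        refine Finset.sum_congr rfl fun j _ => ?_
        ring
    _ = ∑ ℓ ∈ T₀, ∑ m ∈ suppT g, ∑ ξ : Fin N, ∑ j : Fin N,
          phi0 K N ct.S Φ (pderiv (some (j, m)) g) *
            ((ct.S ^ ℓ) (ct.Fv ξ) * ct.P ξ ℓ ((ct.S ^ m) (Φ j))) :=
        Finset.sum_congr rfl fun ℓ _ => Finset.sum_comm
    _ = ∑ m ∈ suppT g, ∑ ℓ ∈ T₀, ∑ ξ : Fin N, ∑ j : Fin N,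
          phi0 K N ct.S Φ (pderiv (some (j, m)) g) *
            ((ct.S ^ ℓ) (ct.Fv ξ) * ct.P ξ ℓ ((ct.S ^ m) (Φ j))) := Finset.sum_comm
    _ = ∑ m ∈ suppT g, ∑ ℓ ∈ T₀, ∑ j : Fin N, ∑ ξ : Fin N,
          phi0 K N ct.S Φ (pderiv (some (j, m)) g) *
            ((ct.S ^ ℓ) (ct.Fv ξ) * ct.P ξ ℓ ((ct.S ^ m) (Φ j))) :=
        Finset.sum_congr rfl fun m _ => Finset.sum_congr rfl fun ℓ _ => Finset.sum_comm
    _ = ∑ m ∈ suppT g, ∑ j : Fin N, ∑ ℓ ∈ T₀, ∑ ξ : Fin N,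
          phi0 K N ct.S Φ (pderiv (some (j, m)) g) *
            ((ct.S ^ ℓ) (ct.Fv ξ) * ct.P ξ ℓ ((ct.S ^ m) (Φ j))) :=
        Finset.sum_congr rfl fun m _ => Finset.sum_comm
    _ = ∑ m ∈ suppT g, ∑ j, phi0 K N ct.S Φ (pderiv (some (j, m)) g) *
        (ct.S ^ m) (ct.DT (Φ j)) := by
        refine Finset.sum_congr rfl fun m hm => Finset.sum_congr rfl fun j _ => ?_
        rw [h2 m hm j, Finset.mul_sum]
        refine Finset.sum_congr rfl fun ℓ _ => ?_
        rw [Finset.mul_sum]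

end Phi
section RepSec
variable (ct : Ctx K N) (Φ : Fin N → FF K N)

/-- `v` is the value of the substitution `φ` at `f`. -/
def Rep (f v : FF K N) : Prop :=
  ∃ g h : PolyF K N, phi0 K N ct.S Φ h ≠ 0 ∧ f = ι K N g / ι K N h ∧
    v = phi0 K N ct.S Φ g / phi0 K N ct.S Φ h

variable {ct Φ}

lemma phi0_ne_imp_ι_ne {h : PolyF K N} (hh : phi0 K N ct.S Φ h ≠ 0) : ι K N h ≠ 0 :=
  ι_ne_zero fun h0 => hh (by rw [h0, map_zero])

lemma equiv_ne_zero (e : FF K N ≃+* FF K N) {x : FF K N} (hx : x ≠ 0) : e x ≠ 0 :=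
  fun h => hx (by rw [← RingEquiv.symm_apply_apply e x, h, RingEquiv.map_zero])

lemma equiv_div (e : FF K N ≃+* FF K N) (a b : FF K N) : e (a / b) = e a / e b := by
  by_cases hb : b = 0
  · rw [hb, div_zero, RingEquiv.map_zero, div_zero]
  · have hb' : e b ≠ 0 := equiv_ne_zero e hb
    rw [eq_div_iff hb', ← RingEquiv.map_mul, div_mul_cancel₀ _ hb]

lemma equiv_zpow_ne_zero (e : FF K N ≃+* FF K N) (m : ℤ) {x : FF K N} (hx : x ≠ 0) :
    (e ^ m) x ≠ 0 := equiv_ne_zero (e ^ m) hx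

namespace Rep

lemma unique {f v v' : FF K N} (h1 : Rep ct Φ f v) (h2 : Rep ct Φ f v') : v = v' := by
  obtain ⟨g1, h1', hh1, hf1, hv1⟩ := h1
  obtain ⟨g2, h2', hh2, hf2, hv2⟩ := h2
  have hι1 := phi0_ne_imp_ι_ne hh1
  have hι2 := phi0_ne_imp_ι_ne hh2
  rw [hf2, div_eq_div_iff hι2 hι1, ← RingHom.map_mul, ← RingHom.map_mul] at hf1
  have := ι_inj hf1
  have hmul : phi0 K N ct.S Φ (g2 * h1') = phi0 K N ct.S Φ (g1 * h2') := by rw [this]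
  rw [RingHom.map_mul, RingHom.map_mul] at hmul
  rw [hv1, hv2, div_eq_div_iff hh1 hh2]
  exact hmul.symm

lemma poly (g : PolyF K N) : Rep ct Φ (ι K N g) (phi0 K N ct.S Φ g) :=
  ⟨g, 1, by rw [map_one]; exact one_ne_zero, by rw [map_one, div_one], by rw [map_one, div_one]⟩

lemma zero : Rep ct Φ (0 : FF K N) 0 := by
  have := poly (ct := ct) (Φ := Φ) (0 : PolyF K N)
  rwa [map_zero, map_zero] at this

lemma mul {f1 f2 v1 v2 : FF K N} (h1 : Rep ct Φ f1 v1) (h2 : Rep ct Φ f2 v2) :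
    Rep ct Φ (f1 * f2) (v1 * v2) := by
  obtain ⟨g1, k1, hk1, rfl, rfl⟩ := h1
  obtain ⟨g2, k2, hk2, rfl, rfl⟩ := h2
  exact ⟨g1 * g2, k1 * k2, by rw [RingHom.map_mul]; exact mul_ne_zero hk1 hk2,
    by rw [RingHom.map_mul, RingHom.map_mul, div_mul_div_comm],
    by rw [RingHom.map_mul, RingHom.map_mul, div_mul_div_comm]⟩

lemma add {f1 f2 v1 v2 : FF K N} (h1 : Rep ct Φ f1 v1) (h2 : Rep ct Φ f2 v2) :
    Rep ct Φ (f1 + f2) (v1 + v2) := by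
  obtain ⟨g1, k1, hk1, rfl, rfl⟩ := h1
  obtain ⟨g2, k2, hk2, rfl, rfl⟩ := h2
  refine ⟨g1 * k2 + k1 * g2, k1 * k2, by rw [RingHom.map_mul]; exact mul_ne_zero hk1 hk2, ?_, ?_⟩
  · rw [div_add_div _ _ (phi0_ne_imp_ι_ne hk1) (phi0_ne_imp_ι_ne hk2), RingHom.map_add,
      RingHom.map_mul, RingHom.map_mul, RingHom.map_mul]
  · rw [div_add_div _ _ hk1 hk2, RingHom.map_add, RingHom.map_mul, RingHom.map_mul,
      RingHom.map_mul]

lemma neg {f v : FF K N} (h : Rep ct Φ f v) : Rep ct Φ (-f) (-v) := by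
  obtain ⟨g, k, hk, rfl, rfl⟩ := h
  exact ⟨-g, k, hk, by rw [map_neg, neg_div], by rw [map_neg, neg_div]⟩

lemma sub {f1 f2 v1 v2 : FF K N} (h1 : Rep ct Φ f1 v1) (h2 : Rep ct Φ f2 v2) :
    Rep ct Φ (f1 - f2) (v1 - v2) := by
  rw [sub_eq_add_neg, sub_eq_add_neg]; exact h1.add h2.neg

lemma div {f1 f2 v1 v2 : FF K N} (h1 : Rep ct Φ f1 v1) (h2 : Rep ct Φ f2 v2) (hv2 : v2 ≠ 0) :
    Rep ct Φ (f1 / f2) (v1 / v2) := by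
  obtain ⟨g1, k1, hk1, rfl, rfl⟩ := h1
  obtain ⟨g2, k2, hk2, rfl, rfl⟩ := h2
  have hg2 : phi0 K N ct.S Φ g2 ≠ 0 := fun h0 => hv2 (by rw [h0, zero_div])
  have hιg2 : ι K N g2 ≠ 0 := phi0_ne_imp_ι_ne hg2
  have hιk1 : ι K N k1 ≠ 0 := phi0_ne_imp_ι_ne hk1
  have hιk2 : ι K N k2 ≠ 0 := phi0_ne_imp_ι_ne hk2
  refine ⟨g1 * k2, k1 * g2, by rw [RingHom.map_mul]; exact mul_ne_zero hk1 hg2, ?_, ?_⟩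
  · rw [RingHom.map_mul, RingHom.map_mul]
    field_simp
  · rw [RingHom.map_mul, RingHom.map_mul]
    field_simp

lemma sum {α : Type*} {s : Finset α} {f v : α → FF K N}
    (h : ∀ k ∈ s, Rep ct Φ (f k) (v k)) :
    Rep ct Φ (∑ k ∈ s, f k) (∑ k ∈ s, v k) := by
  classical
  induction s using Finset.induction_on with
  | empty => simpa using Rep.zero
  | insert _ _ hx ih =>
      rw [Finset.sum_insert hx, Finset.sum_insert hx]
      exact (h _ (Finset.mem_insert_self _ _)).add (ih fun k hk => h k (Finset.mem_insert_of_mem hk))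

lemma shift (c : Ctx K N) {f v : FF K N} (h : Rep ct Φ f v) : Rep ct Φ (c.S f) (ct.S v) := by
  obtain ⟨g, k, hk, rfl, rfl⟩ := h
  refine ⟨sh g, sh k, ?_, ?_, ?_⟩
  · rw [← S_phi0]; exact equiv_ne_zero _ hk
  · rw [equiv_div, S_ι, S_ι]
  · rw [equiv_div, S_phi0, S_phi0]

lemma shift_symm (c : Ctx K N) {f v : FF K N} (h : Rep ct Φ f v) :
    Rep ct Φ (c.S.symm f) (ct.S.symm v) := by
  obtain ⟨g, k, hk, rfl, rfl⟩ := h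
  refine ⟨sh' g, sh' k, ?_, ?_, ?_⟩
  · rw [← Ssymm_phi0]; exact equiv_ne_zero _ hk
  · rw [equiv_div, Ssymm_ι, Ssymm_ι]
  · rw [equiv_div, Ssymm_phi0, Ssymm_phi0]

lemma shift_zpow (c : Ctx K N) (m : ℤ) {f v : FF K N} (h : Rep ct Φ f v) :
    Rep ct Φ ((c.S ^ m) f) ((ct.S ^ m) v) := by
  induction m using Int.induction_on generalizing f v with
  | zero => rw [zpow_zero, zpow_zero]; exact h
  | succ n ih => rw [c.S_pow_succ, ct.S_pow_succ]; exact (ih h).shift c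
  | pred n ih => rw [c.S_pow_pred, ct.S_pow_pred]; exact ih (h.shift_symm c)

variable {phiF : Fin N → FF K N}

lemma DT_poly (c : Ctx K N) (hFv : ∀ ξ, Rep ct Φ (c.Fv ξ) (phiF ξ))
    (hMT : ∀ i, ct.DT (Φ i) = phiF i) (g : PolyF K N) :
    Rep ct Φ (c.DT (ι K N g)) (ct.DT (phi0 K N ct.S Φ g)) := by
  have hL : c.DT (ι K N g) = ∑ ℓ ∈ suppT g, ∑ ξ : Fin N,
      (c.S ^ ℓ) (c.Fv ξ) * ι K N (pderiv (some (ξ, ℓ)) g) := by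
    rw [c.DT_eq_sum _ (suppT g) (fun j ℓ h => by rw [c.P_poly, suppT_spec h j, map_zero])]
    exact Finset.sum_congr rfl fun ℓ _ => Finset.sum_congr rfl fun ξ _ => by rw [c.P_poly]
  have hR : ct.DT (phi0 K N ct.S Φ g) = ∑ ℓ ∈ suppT g, ∑ ξ : Fin N,
      (ct.S ^ ℓ) (phiF ξ) * phi0 K N ct.S Φ (pderiv (some (ξ, ℓ)) g) := by
    rw [DT_phi0]
    exact Finset.sum_congr rfl fun ℓ _ => Finset.sum_congr rfl fun ξ _ => by
      rw [hMT ξ, mul_comm]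
  rw [hL, hR]
  exact Rep.sum fun ℓ _ => Rep.sum fun ξ _ =>
    ((hFv ξ).shift_zpow c ℓ).mul (Rep.poly _)

lemma DT (c : Ctx K N) (hFv : ∀ ξ, Rep ct Φ (c.Fv ξ) (phiF ξ))
    (hMT : ∀ i, ct.DT (Φ i) = phiF i) {f v : FF K N} (hfv : Rep ct Φ f v) :
    Rep ct Φ (c.DT f) (ct.DT v) := by
  obtain ⟨g, h, hDh, rfl, rfl⟩ := hfv
  have hιh := phi0_ne_imp_ι_ne hDh
  rw [c.DT_der.div _ _ hιh, ct.DT_der.div _ _ hDh]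
  have hfv' : Rep ct Φ (ι K N g / ι K N h)
      (phi0 K N ct.S Φ g / phi0 K N ct.S Φ h) := ⟨g, h, hDh, rfl, rfl⟩
  exact ((DT_poly c hFv hMT g).sub (hfv'.mul (DT_poly c hFv hMT h))).div
    (Rep.poly h) hDh

end Rep
end RepSec
theorem stmt_10_aux {d : ℕ} (c ct : Ctx K N) (Φ phiF : Fin N → FF K N)
    (hphiF : ∀ i, Rep ct Φ (c.Fv i) (phiF i))
    (hMT : ∀ i, ct.DT (Φ i) = phiF i)
    (M U phiM phiU : Matrix (Fin d) (Fin d) (FF K N))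
    (hLax : M.map c.DT = U.map ⇑c.S * M - M * U)
    (hphiM : ∀ r s, Rep ct Φ (M r s) (phiM r s))
    (hphiU : ∀ r s, Rep ct Φ (U r s) (phiU r s)) :
    phiM.map ct.DT = phiU.map ⇑ct.S * phiM - phiM * phiU := by
  classical
  ext r s
  rw [Matrix.map_apply]
  have hRHS : (phiU.map ⇑ct.S * phiM - phiM * phiU) r s
      = (∑ k, ct.S (phiU r k) * phiM k s) - ∑ k, phiM r k * phiU k s := by
    simp [Matrix.sub_apply, Matrix.mul_apply, Matrix.map_apply]
  rw [hRHS]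
  have hLax' : c.DT (M r s) = (∑ k, c.S (U r k) * M k s) - ∑ k, M r k * U k s := by
    have h0 := congrFun (congrFun hLax r) s
    simpa [Matrix.map_apply, Matrix.sub_apply, Matrix.mul_apply] using h0
  have h1 : Rep ct Φ (c.DT (M r s)) (ct.DT (phiM r s)) :=
    Rep.DT c hphiF hMT (hphiM r s)
  have h2 : Rep ct Φ ((∑ k, c.S (U r k) * M k s) - ∑ k, M r k * U k s)
      ((∑ k, ct.S (phiU r k) * phiM k s) - ∑ k, phiM r k * phiU k s) :=
    (Rep.sum fun k _ => ((hphiU r k).shift c).mul (hphiM k s)).sub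
      (Rep.sum fun k _ => (hphiM r k).mul (hphiU k s))
  rw [← hLax'] at h2
  exact h1.unique h2

end Stmt10

set_option maxHeartbeats 4000000 in
/-- `F` (with shift `S`, partial derivatives `P`, equation `𝔽` and total derivative `D_t`) and
`F̃` (with shift `S̃`, partial derivatives `P̃`, equation `𝔽̃` and total derivative `D̃_t`)
are two copies of the rational-function field; shifts and partial derivatives are
quantified by their characterizing properties.  `Φ = (Φ¹,…,Φ^N)` with `Φ^i ∈ F̃`, and
`φ` is the substitution with `φ(n) = n`, `φ(u^j_ℓ) = S̃^ℓ(Φ^j)` (the homomorphism `phi0`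
on polynomials, extended to fractions whose denominator has nonzero image; the extended
values on `𝔽`, `M`, `U` are recorded by `phiF`, `phiM`, `phiU`).  Assume Φ is a
Miura-type transformation from `𝔽̃` to `𝔽` (i.e. `D̃_t(Φ^i) = φ(𝔽^i)`), `(M,U)` is an
MLR for `𝔽`, `φ` is defined on every entry of `M`, `U`, and `det φ(M) ≠ 0`.  Then
`(φ(M), φ(U))` is an MLR for `𝔽̃`: `D̃_t(φ(M)) = S̃(φ(U))·φ(M) − φ(M)·φ(U)`. -/
theorem stmt_10 {d N : ℕ} (hd : 0 < d) (hN : 0 < N)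
    (K : Type) [Field K] [CharZero K]
    -- the shift S of F and the partial derivatives ∂_{j,ℓ} of F
    (S : FF K N ≃+* FF K N)
    (hSK : ∀ c : K, S (algebraMap K (FF K N) c) = algebraMap K (FF K N) c)
    (hSn : S (gen K N none) = gen K N none + 1)
    (hSu : ∀ (j : Fin N) (ℓ : ℤ), S (gen K N (some (j, ℓ))) = gen K N (some (j, ℓ + 1)))
    (P : Fin N → ℤ → FF K N → FF K N)
    (hPadd : ∀ j ℓ x y, P j ℓ (x + y) = P j ℓ x + P j ℓ y)
    (hPmul : ∀ j ℓ x y, P j ℓ (x * y) = x * P j ℓ y + P j ℓ x * y)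
    (hPK : ∀ (j : Fin N) (ℓ : ℤ) (c : K), P j ℓ (algebraMap K (FF K N) c) = 0)
    (hPn : ∀ (j : Fin N) (ℓ : ℤ), P j ℓ (gen K N none) = 0)
    (hPu : ∀ (j : Fin N) (ℓ : ℤ) (i : Fin N) (m : ℤ),
      P j ℓ (gen K N (some (i, m))) = if i = j ∧ m = ℓ then 1 else 0)
    -- the shift S̃ of F̃ and the partial derivatives ∂̃_{j,ℓ} of F̃
    (St : FF K N ≃+* FF K N)
    (hStK : ∀ c : K, St (algebraMap K (FF K N) c) = algebraMap K (FF K N) c)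
    (hStn : St (gen K N none) = gen K N none + 1)
    (hStu : ∀ (j : Fin N) (ℓ : ℤ), St (gen K N (some (j, ℓ))) = gen K N (some (j, ℓ + 1)))
    (Pt : Fin N → ℤ → FF K N → FF K N)
    (hPtadd : ∀ j ℓ x y, Pt j ℓ (x + y) = Pt j ℓ x + Pt j ℓ y)
    (hPtmul : ∀ j ℓ x y, Pt j ℓ (x * y) = x * Pt j ℓ y + Pt j ℓ x * y)
    (hPtK : ∀ (j : Fin N) (ℓ : ℤ) (c : K), Pt j ℓ (algebraMap K (FF K N) c) = 0)
    (hPtn : ∀ (j : Fin N) (ℓ : ℤ), Pt j ℓ (gen K N none) = 0)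
    (hPtu : ∀ (j : Fin N) (ℓ : ℤ) (i : Fin N) (m : ℤ),
      Pt j ℓ (gen K N (some (i, m))) = if i = j ∧ m = ℓ then 1 else 0)
    -- the equations 𝔽 (in F) and 𝔽̃ (in F̃)
    (a b : ℤ) (hab : a ≤ b)
    (Fv : Fin N → FF K N) (hFv : ∀ ξ, DependsOnly K N a b (Fv ξ))
    (at_ bt : ℤ) (hatbt : at_ ≤ bt)
    (Ftv : Fin N → FF K N) (hFtv : ∀ ξ, DependsOnly K N at_ bt (Ftv ξ))
    -- the Miura-type transformation Φ and the recorded values of φ on 𝔽, M, U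
    (Φ : Fin N → FF K N)
    (phiF : Fin N → FF K N)
    (hphiF : ∀ i : Fin N, ∃ g h : PolyF K N, phi0 K N St Φ h ≠ 0 ∧
      Fv i = algebraMap (PolyF K N) (FF K N) g / algebraMap (PolyF K N) (FF K N) h ∧
      phiF i = phi0 K N St Φ g / phi0 K N St Φ h)
    (hMT : ∀ i : Fin N, Dt K N St Pt Ftv (Φ i) = phiF i)
    (M U phiM phiU : Matrix (Fin d) (Fin d) (FF K N))
    (hMdet : M.det ≠ 0)
    (hLax : M.map (Dt K N S P Fv) = U.map ⇑S * M - M * U)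
    (hphiM : ∀ r s : Fin d, ∃ g h : PolyF K N, phi0 K N St Φ h ≠ 0 ∧
      M r s = algebraMap (PolyF K N) (FF K N) g / algebraMap (PolyF K N) (FF K N) h ∧
      phiM r s = phi0 K N St Φ g / phi0 K N St Φ h)
    (hphiU : ∀ r s : Fin d, ∃ g h : PolyF K N, phi0 K N St Φ h ≠ 0 ∧
      U r s = algebraMap (PolyF K N) (FF K N) g / algebraMap (PolyF K N) (FF K N) h ∧
      phiU r s = phi0 K N St Φ g / phi0 K N St Φ h)
    (hphiMdet : phiM.det ≠ 0) :
    phiM.map (Dt K N St Pt Ftv) = phiU.map ⇑St * phiM - phiM * phiU :=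
  Stmt10.stmt_10_aux ⟨S, hSK, hSn, hSu, P, hPadd, hPmul, hPK, hPn, hPu, Fv⟩
    ⟨St, hStK, hStn, hStu, Pt, hPtadd, hPtmul, hPtK, hPtn, hPtu, Ftv⟩
    Φ phiF hphiF hMT M U phiM phiU hLax hphiM hphiU
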